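/- arXiv:2505.23819 — 6 statements merged into one kernel-verified Lean document; each statement's English description precedes it below -/
import Mathlib

section
/- For all natural numbers p, q, v and all natural numbers i, j, the mma swizzle function satisfies swz p q v i j = ((((i / 2^p) % 2^q) * 2^v) ^^^ j); that is, swizzling the coordinate pair (i, j) equals XOR-ing into j a constant that depends only on i. -/
def swz (p q v i j : ℕ) : ℕ :=
  ((((i / 2 ^ p) % 2 ^ q) ^^^ (j / 2 ^ v)) * 2 ^ v) ^^^ (j % 2 ^ v)

/-- Swizzling the coordinate pair `(i, j)` equals XOR-ing into `j` a constant that depends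
only on `i`. -/
theorem swz_eq_xor_const (p q v i j : ℕ) :
    swz p q v i j = ((((i / 2 ^ p) % 2 ^ q) * 2 ^ v) ^^^ j) := by
  unfold swz
  apply Nat.eq_of_testBit_eq
  intro k
  have hdiv : ∀ x : ℕ, (x / 2 ^ v).testBit (k - v) = x.testBit (v + (k - v)) := by
    intro x
    rw [← Nat.shiftRight_eq_div_pow, Nat.testBit_shiftRight]
  simp only [Nat.testBit_xor, Nat.mul_comm _ (2 ^ v), Nat.testBit_two_pow_mul,
    Nat.testBit_mod_two_pow, hdiv]
  rcases lt_or_ge k v with h | h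
  · simp [h, Nat.not_le.mpr h]
  · have : v + (k - v) = k := by omega
    simp [h, Nat.not_lt.mpr h, this, Nat.testBit_xor, Bool.xor_assoc]
end

section
/- The mma swizzle function is linear over F₂ in the bits of its coordinate arguments: for all natural numbers p, q, v and all i₁, i₂, j₁, j₂ : ℕ, swz p q v (i₁ ^^^ i₂) (j₁ ^^^ j₂) = (swz p q v i₁ j₁) ^^^ (swz p q v i₂ j₂). -/
lemma xor_div' (a b n : ℕ) : (a ^^^ b) / 2 ^ n = a / 2 ^ n ^^^ b / 2 ^ n := by
  apply Nat.eq_of_testBit_eq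
  intro k
  simp [← Nat.shiftRight_eq_div_pow, Nat.testBit_shiftRight]

lemma xor_mod' (a b n : ℕ) : (a ^^^ b) % 2 ^ n = a % 2 ^ n ^^^ b % 2 ^ n := by
  apply Nat.eq_of_testBit_eq
  intro k
  simp [Nat.testBit_mod_two_pow, Bool.and_xor_distrib_left]

lemma xor_mul' (a b n : ℕ) : (a ^^^ b) * 2 ^ n = a * 2 ^ n ^^^ b * 2 ^ n := by
  apply Nat.eq_of_testBit_eq
  intro k
  simp [← Nat.shiftLeft_eq, Nat.testBit_shiftLeft, Bool.and_xor_distrib_left]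

lemma xor_left_comm' (a b c : ℕ) : a ^^^ (b ^^^ c) = b ^^^ (a ^^^ c) := by
  rw [← Nat.xor_assoc, ← Nat.xor_assoc, Nat.xor_comm a b]

/-- The mma swizzle function is linear over F₂ in the bits of its coordinate arguments. -/
theorem swz_xor_linear (p q v : ℕ) (i₁ i₂ j₁ j₂ : ℕ) :
    swz p q v (i₁ ^^^ i₂) (j₁ ^^^ j₂) = (swz p q v i₁ j₁) ^^^ (swz p q v i₂ j₂) := by
  simp only [swz, xor_div', xor_mod', xor_mul']
  simp only [Nat.xor_assoc, Nat.xor_comm, xor_left_comm']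
end

section
/- For each fixed row coordinate i, the mma swizzle is an involution in the column coordinate: for all natural numbers p, q, v, i, j, swz p q v i (swz p q v i j) = j. -/
/-- Auxiliary: xor with a multiple of `2 ^ v` acts as addition on remainders below `2 ^ v`. -/
theorem swz_aux_xor_eq_add {v y : ℕ} (h : y < 2 ^ v) (x : ℕ) :
    (x * 2 ^ v) ^^^ y = x * 2 ^ v + y := by
  rw [Nat.mul_comm]
  apply Nat.eq_of_testBit_eq
  intro j
  rw [Nat.testBit_two_pow_mul_add _ h, Nat.testBit_xor, Nat.testBit_two_pow_mul]
  by_cases hj : j < v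
  · simp [hj, Nat.not_le_of_lt hj]
  · have : y < 2 ^ j := lt_of_lt_of_le h (Nat.pow_le_pow_right (by norm_num) (Nat.le_of_not_lt hj))
    simp [hj, Nat.le_of_not_lt hj, Nat.testBit_lt_two_pow this]

/-- For each fixed row coordinate `i`, the mma swizzle is an involution in the column
coordinate. -/
theorem swz_involutive (p q v i j : ℕ) :
    swz p q v i (swz p q v i j) = j := by
  have hv : 0 < 2 ^ v := Nat.two_pow_pos v
  have hm : j % 2 ^ v < 2 ^ v := Nat.mod_lt _ hv
  unfold swz
  rw [swz_aux_xor_eq_add hm]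
  simp only [Nat.mul_comm _ (2 ^ v)]
  rw [Nat.mul_add_div hv, Nat.mul_add_mod,
    Nat.div_eq_of_lt hm, Nat.add_zero, ← Nat.xor_assoc, Nat.xor_self, Nat.zero_xor,
    Nat.mod_eq_of_lt hm, Nat.mul_comm, swz_aux_xor_eq_add hm]
  exact Nat.div_add_mod' j (2 ^ v)
end

section
/- Swizzling preserves vectorized (contiguous low-bit) positions: for all natural numbers p, q, v, i, j, one has (swz p q v i j) % 2^v = j % 2^v, so elements that are contiguous within a vector of length 2^v remain contiguous after swizzling. -/
/-- XOR with a multiple of `2 ^ v` does not change the residue mod `2 ^ v`. -/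
lemma xor_mul_pow_mod (a b v : ℕ) : (a * 2 ^ v ^^^ b % 2 ^ v) % 2 ^ v = b % 2 ^ v := by
  apply Nat.eq_of_testBit_eq
  intro k
  rcases lt_or_ge k v with h | h
  · simp only [Nat.testBit_mod_two_pow, Nat.testBit_xor, h, decide_true, Bool.true_and]
    rw [← Nat.shiftLeft_eq, Nat.testBit_shiftLeft]
    simp [Nat.not_le.2 h]
  · simp [Nat.testBit_mod_two_pow, Nat.not_lt.2 h]

/-- Swizzling preserves vectorized (contiguous low-bit) positions: the residue modulo
`2 ^ v` is unchanged by swizzling. -/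
theorem swz_mod_vec (p q v i j : ℕ) :
    (swz p q v i j) % 2 ^ v = j % 2 ^ v := by
  unfold swz
  rw [xor_mul_pow_mod]
end

section
/- Existence part of the abstract swizzling lemma: let d be a natural number and let U, V be submodules (subspaces) of the F₂ vector space V_d := Fin d → ZMod 2. Then there exists a submodule W of V_d with Module.finrank (ZMod 2) W = d - max (Module.finrank (ZMod 2) U) (Module.finrank (ZMod 2) V), such that Disjoint W U and Disjoint W V (equivalently, W has trivial intersection with the set union U ∪ V). -/
open Module Submodule

lemma exists_notMem_pair {K M : Type*} [Field K] [AddCommGroup M] [Module K M]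
    (A B : Submodule K M) (hA : A ≠ ⊤) (hB : B ≠ ⊤) : ∃ x, x ∉ A ∧ x ∉ B := by
  obtain ⟨a, ha⟩ : ∃ a, a ∉ A := by
    by_contra h; push_neg at h; exact hA (eq_top_iff.mpr fun x _ => h x)
  obtain ⟨b, hb⟩ : ∃ b, b ∉ B := by
    by_contra h; push_neg at h; exact hB (eq_top_iff.mpr fun x _ => h x)
  by_cases haB : a ∈ B
  · by_cases hbA : b ∈ A
    · refine ⟨a + b, fun h => ha ?_, fun h => hb ?_⟩
      · simpa using A.sub_mem h hbA
      · simpa using B.sub_mem h haB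
    · exact ⟨b, hbA, hb⟩
  · exact ⟨a, ha, haB⟩

lemma aux_swizzle (d : ℕ) (k : ℕ) : ∀ (U V : Submodule (ZMod 2) (Fin d → ZMod 2)),
    Module.finrank (ZMod 2) U + k ≤ d → Module.finrank (ZMod 2) V + k ≤ d →
    ∃ W : Submodule (ZMod 2) (Fin d → ZMod 2),
      Module.finrank (ZMod 2) W = k ∧ Disjoint W U ∧ Disjoint W V := by
  induction k with
  | zero => intro U V _ _; exact ⟨⊥, by simp, disjoint_bot_left, disjoint_bot_left⟩
  | succ k ih =>
    intro U V hU hV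
    obtain ⟨W', hW'rank, hW'U, hW'V⟩ := ih U V (by omega) (by omega)
    have hd : Module.finrank (ZMod 2) (Fin d → ZMod 2) = d := by
      simp [Module.finrank_pi]
    have hsupU : W' ⊔ U ≠ ⊤ := by
      intro h
      have h1 := Submodule.finrank_sup_add_finrank_inf_eq W' U
      have h2 : Module.finrank (ZMod 2) ((W' ⊔ U : Submodule (ZMod 2) _)) = d := by
        rw [h, finrank_top, hd]
      omega
    have hsupV : W' ⊔ V ≠ ⊤ := by
      intro h
      have h1 := Submodule.finrank_sup_add_finrank_inf_eq W' V
      have h2 : Module.finrank (ZMod 2) ((W' ⊔ V : Submodule (ZMod 2) _)) = d := by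
        rw [h, finrank_top, hd]
      omega
    obtain ⟨x, hxU, hxV⟩ := exists_notMem_pair _ _ hsupU hsupV
    have hxW' : x ∉ W' := fun h => hxU (Submodule.mem_sup_left h)
    have hdisj : Disjoint W' (Submodule.span (ZMod 2) {x}) := by
      rw [Submodule.disjoint_span_singleton]
      intro h; exact absurd h hxW'
    refine ⟨W' ⊔ Submodule.span (ZMod 2) {x}, ?_, ?_, ?_⟩
    · have h1 := Submodule.finrank_sup_add_finrank_inf_eq W' (Submodule.span (ZMod 2) {x})
      rw [hdisj.eq_bot] at h1
      have hx0 : x ≠ 0 := fun h => hxW' (h ▸ W'.zero_mem)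
      rw [finrank_span_singleton hx0] at h1
      simp at h1
      omega
    · rw [disjoint_iff_inf_le]
      rintro y ⟨hy1, hy2⟩
      obtain ⟨w, hw, z, hz, rfl⟩ := Submodule.mem_sup.mp hy1
      obtain ⟨c, rfl⟩ := Submodule.mem_span_singleton.mp hz
      rcases (by decide : ∀ c : ZMod 2, c = 0 ∨ c = 1) c with rfl | rfl
      · simp only [zero_smul, add_zero] at hy2 ⊢
        exact hW'U.eq_bot ▸ Submodule.mem_inf.mpr ⟨hw, hy2⟩
      · exfalso
        apply hxU
        have : x = (w + (1 : ZMod 2) • x) - w := by simp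
        rw [this]
        exact Submodule.sub_mem _ (Submodule.mem_sup_right hy2) (Submodule.mem_sup_left hw)
    · rw [disjoint_iff_inf_le]
      rintro y ⟨hy1, hy2⟩
      obtain ⟨w, hw, z, hz, rfl⟩ := Submodule.mem_sup.mp hy1
      obtain ⟨c, rfl⟩ := Submodule.mem_span_singleton.mp hz
      rcases (by decide : ∀ c : ZMod 2, c = 0 ∨ c = 1) c with rfl | rfl
      · simp only [zero_smul, add_zero] at hy2 ⊢
        exact hW'V.eq_bot ▸ Submodule.mem_inf.mpr ⟨hw, hy2⟩
      · exfalso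
        apply hxV
        have : x = (w + (1 : ZMod 2) • x) - w := by simp
        rw [this]
        exact Submodule.sub_mem _ (Submodule.mem_sup_right hy2) (Submodule.mem_sup_left hw)

/-- Existence part of the abstract swizzling lemma: for submodules `U, V` of the `F₂`
vector space `Fin d → ZMod 2`, there is a submodule `W` of dimension
`d - max (dim U) (dim V)` with trivial intersection with both `U` and `V`. -/
theorem exists_compl_of_union (d : ℕ) (U V : Submodule (ZMod 2) (Fin d → ZMod 2)) :
    ∃ W : Submodule (ZMod 2) (Fin d → ZMod 2),
      Module.finrank (ZMod 2) W =
        d - max (Module.finrank (ZMod 2) U) (Module.finrank (ZMod 2) V) ∧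
      Disjoint W U ∧ Disjoint W V := by
  have hd : Module.finrank (ZMod 2) (Fin d → ZMod 2) = d := by simp [Module.finrank_pi]
  have hU : Module.finrank (ZMod 2) U ≤ d := le_trans U.finrank_le hd.le
  have hV : Module.finrank (ZMod 2) V ≤ d := le_trans V.finrank_le hd.le
  exact aux_swizzle d (d - max (Module.finrank (ZMod 2) U) (Module.finrank (ZMod 2) V))
    U V (by omega) (by omega)
end

section
/- Constructive step of the abstract swizzling lemma: let d be a natural number and let I, E, F, C be submodules of the F₂ vector space V_d := Fin d → ZMod 2 that are independent (as a family of submodules) with I ⊔ E ⊔ F ⊔ C = ⊤. Set U := I ⊔ E and V := I ⊔ F. Let φ : E →ₗ[ZMod 2] F be an injective linear map, and let G be the submodule of V_d equal to the range of the linear map from E to V_d sending e to (e : V_d) + (φ e : V_d). Then Disjoint (G ⊔ C) U and Disjoint (G ⊔ C) V, and Module.finrank (ZMod 2) (G ⊔ C) = Module.finrank (ZMod 2) E + Module.finrank (ZMod 2) C; consequently, if Module.finrank (ZMod 2) E ≤ Module.finrank (ZMod 2) F, then Module.finrank (ZMod 2) (G ⊔ C) = d - Module.finrank (ZMod 2)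 V. -/
/-- Constructive step of the abstract swizzling lemma: given an independent four-way
decomposition `I ⊔ E ⊔ F ⊔ C = ⊤` of `Fin d → ZMod 2`, with `U = I ⊔ E`, `V = I ⊔ F`,
an injective linear map `φ : E →ₗ F`, and `G` the range of `e ↦ (e : V_d) + (φ e : V_d)`,
the submodule `G ⊔ C` is disjoint from `U` and from `V`, has dimension
`dim E + dim C`, and hence dimension `d - dim V` whenever `dim E ≤ dim F`. -/
theorem swizzling_constructive_step (d : ℕ)
    (I E F C : Submodule (ZMod 2) (Fin d → ZMod 2))
    (hind : iSupIndep ![I, E, F, C])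
    (htop : I ⊔ E ⊔ F ⊔ C = ⊤)
    (φ : E →ₗ[ZMod 2] F) (hφ : Function.Injective φ)
    (G : Submodule (ZMod 2) (Fin d → ZMod 2))
    (hG : G = LinearMap.range (E.subtype + F.subtype.comp φ)) :
    Disjoint (G ⊔ C) (I ⊔ E) ∧ Disjoint (G ⊔ C) (I ⊔ F) ∧
    Module.finrank (ZMod 2) ↥(G ⊔ C) =
      Module.finrank (ZMod 2) E + Module.finrank (ZMod 2) C ∧
    (Module.finrank (ZMod 2) E ≤ Module.finrank (ZMod 2) F →
      Module.finrank (ZMod 2) ↥(G ⊔ C) = d - Module.finrank (ZMod 2) ↥(I ⊔ F)) := by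
  have hsup : ∀ (k j : Fin 4), j ≠ k → ![I,E,F,C] j ≤ ⨆ j' ≠ k, ![I,E,F,C] j' :=
    fun k j hj => le_iSup_of_le j (le_iSup_of_le hj le_rfl)
  have hI : Disjoint I (E ⊔ F ⊔ C) :=
    (hind 0).mono_right (sup_le (sup_le (hsup 0 1 (by decide)) (hsup 0 2 (by decide)))
      (hsup 0 3 (by decide)))
  have hE : Disjoint E (I ⊔ F ⊔ C) :=
    (hind 1).mono_right (sup_le (sup_le (hsup 1 0 (by decide)) (hsup 1 2 (by decide)))
      (hsup 1 3 (by decide)))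
  have hF : Disjoint F (I ⊔ E ⊔ C) :=
    (hind 2).mono_right (sup_le (sup_le (hsup 2 0 (by decide)) (hsup 2 1 (by decide)))
      (hsup 2 3 (by decide)))
  have hC : Disjoint C (I ⊔ E ⊔ F) :=
    (hind 3).mono_right (sup_le (sup_le (hsup 3 0 (by decide)) (hsup 3 1 (by decide)))
      (hsup 3 2 (by decide)))
  have quad : ∀ i ∈ I, ∀ e ∈ E, ∀ f ∈ F, ∀ c ∈ C, i + e + f + c = 0 →
      i = 0 ∧ e = 0 ∧ f = 0 ∧ c = 0 := by
    intro i hi e he f hf c hc h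
    have h1 : i + (e + (f + c)) = 0 := by
      rwa [show i + (e + (f + c)) = i + e + f + c from by abel]
    have hi0 : i = 0 := Submodule.disjoint_def.mp hI i hi (by
      rw [eq_neg_of_add_eq_zero_left h1]
      exact neg_mem (add_mem (Submodule.mem_sup_left (Submodule.mem_sup_left he))
        (add_mem (Submodule.mem_sup_left (Submodule.mem_sup_right hf))
          (Submodule.mem_sup_right hc))))
    have h2 : e + (f + c) = 0 := by rwa [hi0, zero_add] at h1
    have he0 : e = 0 := Submodule.disjoint_def.mp hE e he (by
      rw [eq_neg_of_add_eq_zero_left h2]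
      exact neg_mem (add_mem (Submodule.mem_sup_left (Submodule.mem_sup_right hf))
        (Submodule.mem_sup_right hc)))
    have h3 : f + c = 0 := by rwa [he0, zero_add] at h2
    have hf0 : f = 0 := Submodule.disjoint_def.mp hF f hf (by
      rw [eq_neg_of_add_eq_zero_left h3]
      exact neg_mem (Submodule.mem_sup_right hc))
    have hc0 : c = 0 := by rwa [hf0, zero_add] at h3
    exact ⟨hi0, he0, hf0, hc0⟩
  set ψ : E →ₗ[ZMod 2] (Fin d → ZMod 2) := E.subtype + F.subtype.comp φ with hψ
  have hψapp : ∀ e : E, ψ e = (e : Fin d → ZMod 2) + ((φ e : F) : Fin d → ZMod 2) :=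
    fun e => rfl
  -- disjointness with I ⊔ E
  have d1 : Disjoint (G ⊔ C) (I ⊔ E) := by
    rw [Submodule.disjoint_def]
    intro x hx1 hx2
    obtain ⟨g, hg, c, hc, rfl⟩ := Submodule.mem_sup.mp hx1
    rw [hG] at hg
    obtain ⟨e, rfl⟩ := hg
    obtain ⟨i, hi, e', he', heq⟩ := Submodule.mem_sup.mp hx2
    have h0 : i + (e' - (e : Fin d → ZMod 2)) + (-((φ e : F) : Fin d → ZMod 2)) + (-c) = 0 := by
      rw [hψapp e] at heq
      rw [show i + (e' - (e : Fin d → ZMod 2)) + (-((φ e : F) : Fin d → ZMod 2)) + (-c)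
        = (i + e') - (((e : Fin d → ZMod 2) + ((φ e : F) : Fin d → ZMod 2)) + c) from by abel,
        heq, sub_self]
    obtain ⟨_, _, h3, h4⟩ := quad i hi _ (sub_mem he' e.2) _ (neg_mem (φ e).2) _ (neg_mem hc) h0
    have hφe : φ e = 0 := by
      ext1
      simpa using neg_eq_zero.mp h3
    have he0 : e = 0 := hφ (by rw [hφe, map_zero])
    have hc0 : c = 0 := neg_eq_zero.mp h4
    rw [he0, hc0, map_zero, add_zero]
  -- disjointness with I ⊔ F
  have d2 : Disjoint (G ⊔ C) (I ⊔ F) := by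
    rw [Submodule.disjoint_def]
    intro x hx1 hx2
    obtain ⟨g, hg, c, hc, rfl⟩ := Submodule.mem_sup.mp hx1
    rw [hG] at hg
    obtain ⟨e, rfl⟩ := hg
    obtain ⟨i, hi, f, hf, heq⟩ := Submodule.mem_sup.mp hx2
    have h0 : i + (-(e : Fin d → ZMod 2)) + (f - ((φ e : F) : Fin d → ZMod 2)) + (-c) = 0 := by
      rw [hψapp e] at heq
      rw [show i + (-(e : Fin d → ZMod 2)) + (f - ((φ e : F) : Fin d → ZMod 2)) + (-c)
        = (i + f) - (((e : Fin d → ZMod 2) + ((φ e : F) : Fin d → ZMod 2)) + c) from by abel,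
        heq, sub_self]
    obtain ⟨_, h2, _, h4⟩ := quad i hi _ (neg_mem e.2) _ (sub_mem hf (φ e).2) _ (neg_mem hc) h0
    have he0 : e = 0 := by
      ext1
      simpa using neg_eq_zero.mp h2
    have hc0 : c = 0 := neg_eq_zero.mp h4
    rw [he0, hc0, map_zero, add_zero]
  -- ψ is injective
  have hψinj : Function.Injective ψ := by
    rw [← LinearMap.ker_eq_bot]
    rw [Submodule.eq_bot_iff]
    intro e he
    have h0 : (0 : Fin d → ZMod 2) + (e : Fin d → ZMod 2)
        + ((φ e : F) : Fin d → ZMod 2) + 0 = 0 := by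
      have := LinearMap.mem_ker.mp he
      rw [hψapp e] at this
      rw [zero_add, add_zero, this]
    obtain ⟨_, h2, _, _⟩ := quad 0 (zero_mem I) _ e.2 _ (φ e).2 _ (zero_mem C) h0
    ext1
    simpa using h2
  have hGE : Module.finrank (ZMod 2) G = Module.finrank (ZMod 2) E := by
    rw [hG]
    exact LinearMap.finrank_range_of_inj hψinj
  -- Disjoint G C
  have hGC : Disjoint G C := by
    rw [Submodule.disjoint_def]
    intro x hx1 hx2
    rw [hG] at hx1
    obtain ⟨e, rfl⟩ := hx1
    have h0 : (0 : Fin d → ZMod 2) + (e : Fin d → ZMod 2)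
        + ((φ e : F) : Fin d → ZMod 2) + (-(ψ e)) = 0 := by
      rw [hψapp e]; abel
    obtain ⟨_, h2, h3, _⟩ := quad 0 (zero_mem I) _ e.2 _ (φ e).2 _ (neg_mem hx2) h0
    rw [hψapp e, h2, h3, add_zero]
  have dsum : ∀ A B : Submodule (ZMod 2) (Fin d → ZMod 2), Disjoint A B →
      Module.finrank (ZMod 2) ↥(A ⊔ B) =
        Module.finrank (ZMod 2) A + Module.finrank (ZMod 2) B := by
    intro A B hAB
    have h := Submodule.finrank_sup_add_finrank_inf_eq A B
    rw [hAB.eq_bot] at h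
    simpa using h
  have hrank : Module.finrank (ZMod 2) ↥(G ⊔ C) =
      Module.finrank (ZMod 2) E + Module.finrank (ZMod 2) C := by
    rw [dsum G C hGC, hGE]
  refine ⟨d1, d2, hrank, fun hEF => ?_⟩
  have hIE : Disjoint I E := hI.mono_right (le_sup_left.trans le_sup_left)
  have hIF : Disjoint I F := hI.mono_right (le_sup_right.trans le_sup_left)
  have hIEF : Disjoint (I ⊔ E) F := (hF.mono_right le_sup_left).symm
  have hIEFC : Disjoint (I ⊔ E ⊔ F) C := hC.symm
  have hd : Module.finrank (ZMod 2) I + Module.finrank (ZMod 2) E +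
      Module.finrank (ZMod 2) F + Module.finrank (ZMod 2) C = d := by
    have h1 := dsum _ _ hIEFC
    rw [htop] at h1
    rw [dsum _ _ hIEF, dsum _ _ hIE] at h1
    have htoprk : Module.finrank (ZMod 2) (⊤ : Submodule (ZMod 2) (Fin d → ZMod 2)) = d := by
      rw [finrank_top]
      simp [Module.finrank_pi]
    omega
  rw [hrank, dsum _ _ hIF]
  omega
end
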